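/- Lemma (componentwise propagation conditions). Assume (A6), (A7), and the propagation conditions (PC). Then for any θ ∈ ℝ^p, any j = 1, …, p, and all k = 2, …, K: (n h_k^d Λ0 / σ̄²_max(k))^{r} · E_{θ,Σ} |e_jᵀ θ̃_k − e_jᵀ θ̂_k|^{2r} ≤ E_{0,Σ} ‖ B_k^{1/2} (θ̃_k − θ̂_k) ‖^{2r} ≤ α C(p,r), where E_{θ,Σ} denotes expectation under Y ~ N(Ψᵀθ, Σ), E_{0,Σ} under Y ~ N(0, Σ), and C(p,r) = E|χ²_p|^r. -/

import Mathlib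

open MeasureTheory ProbabilityTheory Matrix Real

noncomputable section

namespace SpatialAdapt

/-- The law `N(m, diag(s i ^ 2))` on `ℝ^n`: product of independent one-dimensional Gaussians. -/
def gaussianVec (n : ℕ) (m s : Fin n → ℝ) : Measure (Fin n → ℝ) :=
  Measure.pi fun i => gaussianReal (m i) (Real.toNNReal (s i ^ 2))

/-- Löwner partial order on symmetric matrices: `A ⪯ B` iff `B - A` is positive semidefinite. -/
def LoewnerLE {ι : Type*} [Fintype ι] (A B : Matrix ι ι ℝ) : Prop :=
  (B - A).PosSemidef

/-- Diagonal covariance matrix `diag(s i ^ 2)`. -/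
def covMat (n : ℕ) (s : Fin n → ℝ) : Matrix (Fin n) (Fin n) ℝ :=
  Matrix.diagonal fun i => s i ^ 2

/-- `W = Σ^{-1/2} 𝒲 Σ^{-1/2} = diag(w i / σ i ^ 2)`. -/
def Wmat (n : ℕ) (σv : Fin n → ℝ) (w : Fin n → ℝ) : Matrix (Fin n) (Fin n) ℝ :=
  Matrix.diagonal fun i => w i / σv i ^ 2

/-- `B = Ψ W Ψᵀ`. -/
def Bmat (n p : ℕ) (σv : Fin n → ℝ) (Ψ : Matrix (Fin p) (Fin n) ℝ) (w : Fin n → ℝ) :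
    Matrix (Fin p) (Fin p) ℝ :=
  Ψ * Wmat n σv w * Ψᵀ

/-- `D = B⁻¹ Ψ W`. -/
def Dmat (n p : ℕ) (σv : Fin n → ℝ) (Ψ : Matrix (Fin p) (Fin n) ℝ) (w : Fin n → ℝ) :
    Matrix (Fin p) (Fin n) ℝ :=
  (Bmat n p σv Ψ w)⁻¹ * Ψ * Wmat n σv w

/-- The quasi-MLE `θ̃ = B⁻¹ Ψ W y`. -/
def thetaTilde (n p : ℕ) (σv : Fin n → ℝ) (Ψ : Matrix (Fin p) (Fin n) ℝ) (w : Fin n → ℝ)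
    (y : Fin n → ℝ) : Fin p → ℝ :=
  (Dmat n p σv Ψ w).mulVec y

/-- Quadratic form `v ⬝ B v`. -/
def quadForm {p : ℕ} (B : Matrix (Fin p) (Fin p) ℝ) (v : Fin p → ℝ) : ℝ :=
  v ⬝ᵥ B.mulVec v

/-- The test statistic `T_{lm} = (θ̃_l - θ̃_m)ᵀ B_l (θ̃_l - θ̃_m)`. -/
def Tstat (n p : ℕ) (σv : Fin n → ℝ) (Ψ : Matrix (Fin p) (Fin n) ℝ) (w : ℕ → Fin n → ℝ)
    (l m : ℕ) (y : Fin n → ℝ) : ℝ :=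
  quadForm (Bmat n p σv Ψ (w l))
    (thetaTilde n p σv Ψ (w l) y - thetaTilde n p σv Ψ (w m) y)

/-- The adaptive index `k̂ = max {k ≤ K : T_{lm} ≤ z_l for all 1 ≤ l < m ≤ k}`. -/
def khat (n p K : ℕ) (σv : Fin n → ℝ) (Ψ : Matrix (Fin p) (Fin n) ℝ) (w : ℕ → Fin n → ℝ)
    (z : ℕ → ℝ) (y : Fin n → ℝ) : ℕ :=
  sSup {k | k ≤ K ∧ ∀ l m, 1 ≤ l → l < m → m ≤ k → Tstat n p σv Ψ w l m y ≤ z l}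

/-- The adaptive estimator `θ̂ = θ̃_{k̂}`. -/
def thetaHat (n p K : ℕ) (σv : Fin n → ℝ) (Ψ : Matrix (Fin p) (Fin n) ℝ) (w : ℕ → Fin n → ℝ)
    (z : ℕ → ℝ) (y : Fin n → ℝ) : Fin p → ℝ :=
  thetaTilde n p σv Ψ (w (khat n p K σv Ψ w z y)) y

/-- The last accepted estimator after `k` steps: `θ̂_k = θ̃_{min(k, k̂)}`. -/
def thetaHatStep (n p K : ℕ) (σv : Fin n → ℝ) (Ψ : Matrix (Fin p) (Fin n) ℝ)
    (w : ℕ → Fin n → ℝ) (z : ℕ → ℝ) (k : ℕ) (y : Fin n → ℝ) : Fin p → ℝ :=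
  thetaTilde n p σv Ψ (w (min k (khat n p K σv Ψ w z y))) y

/-- `C(p, r) = E|χ²_p|^r = 2^r Γ(r + p/2) / Γ(p/2)`. -/
def Cpr (p : ℕ) (r : ℝ) : ℝ :=
  2 ^ r * Real.Gamma (r + p / 2) / Real.Gamma (p / 2)

/-- `P(χ²_p ≥ t)`, the tail of the chi-squared distribution with `p` degrees of freedom. -/
def chiSqTail (p : ℕ) (t : ℝ) : ℝ :=
  ((Measure.pi fun _ : Fin p => gaussianReal 0 1) {x | t ≤ ∑ i, x i ^ 2}).toReal

/-- The `pk × pk` joint covariance `𝔻_k (J_k ⊗ Σm) 𝔻_kᵀ`, whose `(l, m)` block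
is `D_l Σm D_mᵀ` (blocks are indexed by `1, …, k`, i.e. by `Fin k` shifted by one). -/
def jointCov (n p : ℕ) (σv σm : Fin n → ℝ) (Ψ : Matrix (Fin p) (Fin n) ℝ)
    (w : ℕ → Fin n → ℝ) (k : ℕ) : Matrix (Fin k × Fin p) (Fin k × Fin p) ℝ :=
  Matrix.of fun a b =>
    (Dmat n p σv Ψ (w (a.1 + 1)) * covMat n σm * (Dmat n p σv Ψ (w (b.1 + 1)))ᵀ) a.2 b.2

/-- The stacked bias vector `b(k) = (θ̄_1 - θ, …, θ̄_k - θ)`. -/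
def biasVec (n p : ℕ) (σv : Fin n → ℝ) (Ψ : Matrix (Fin p) (Fin n) ℝ) (w : ℕ → Fin n → ℝ)
    (k : ℕ) (f : Fin n → ℝ) (θ : Fin p → ℝ) : Fin k × Fin p → ℝ :=
  fun a => (thetaTilde n p σv Ψ (w (a.1 + 1)) f - θ) a.2

/-- The modeling bias `Δ(k) = b(k)ᵀ 𝚺_k⁻¹ b(k)`. -/
def DeltaK (n p : ℕ) (σv : Fin n → ℝ) (Ψ : Matrix (Fin p) (Fin n) ℝ) (w : ℕ → Fin n → ℝ)
    (k : ℕ) (f : Fin n → ℝ) (θ : Fin p → ℝ) : ℝ :=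
  biasVec n p σv Ψ w k f θ ⬝ᵥ
    (jointCov n p σv σv Ψ w k)⁻¹.mulVec (biasVec n p σv Ψ w k f θ)

/-- The componentwise `k × k` covariance `𝚺_{k,j}` with entries `(D_l Σm D_mᵀ)_{jj}`. -/
def jointCovComp (n p : ℕ) (σv σm : Fin n → ℝ) (Ψ : Matrix (Fin p) (Fin n) ℝ)
    (w : ℕ → Fin n → ℝ) (k : ℕ) (j : Fin p) : Matrix (Fin k) (Fin k) ℝ :=
  Matrix.of fun a b =>
    (Dmat n p σv Ψ (w (a.1 + 1)) * covMat n σm * (Dmat n p σv Ψ (w (b.1 + 1)))ᵀ) j j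

/-- The componentwise bias vector `b_j(k)`. -/
def biasVecComp (n p : ℕ) (σv : Fin n → ℝ) (Ψ : Matrix (Fin p) (Fin n) ℝ)
    (w : ℕ → Fin n → ℝ) (k : ℕ) (f : Fin n → ℝ) (θ : Fin p → ℝ) (j : Fin p) : Fin k → ℝ :=
  fun a => (thetaTilde n p σv Ψ (w (a.1 + 1)) f - θ) j

/-- The componentwise modeling bias `Δ_j(k) = b_j(k)ᵀ 𝚺_{k,j}⁻¹ b_j(k)`. -/
def DeltaComp (n p : ℕ) (σv : Fin n → ℝ) (Ψ : Matrix (Fin p) (Fin n) ℝ)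
    (w : ℕ → Fin n → ℝ) (k : ℕ) (f : Fin n → ℝ) (θ : Fin p → ℝ) (j : Fin p) : ℝ :=
  biasVecComp n p σv Ψ w k f θ j ⬝ᵥ
    (jointCovComp n p σv σv Ψ w k j)⁻¹.mulVec (biasVecComp n p σv Ψ w k f θ j)

open scoped Classical in
/-- `φ(δ)`: equal to `1` for homogeneous errors, `2(1+δ)/(1-δ)² - 1` otherwise. -/
def varphi (n : ℕ) (σ0 σv : Fin n → ℝ) (δ : ℝ) : ℝ :=
  if ∃ c0 c : ℝ, (∀ i, σ0 i = c0) ∧ (∀ i, σv i = c) then 1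
  else 2 * (1 + δ) / (1 - δ) ^ 2 - 1

/-- `σ̄²_max(k) = max_{1 ≤ l ≤ k} σ²_max(l)`. -/
def sbarMax (σmax : ℕ → ℝ) (k : ℕ) : ℝ :=
  sSup (σmax '' Set.Icc 1 k)

/-- Euclidean norm on `ℝ^p`. -/
def enorm {p : ℕ} (v : Fin p → ℝ) : ℝ :=
  Real.sqrt (∑ i, v i ^ 2)


open scoped ComplexOrder in
/-- The square root of a positive semidefinite matrix (the Mathlib definition of December
2024, since removed from Mathlib). -/
def _root_.Matrix.PosSemidef.sqrt {𝕜 : Type*} [RCLike 𝕜] {ι : Type*} [Fintype ι] [DecidableEq ι]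
    {A : Matrix ι ι 𝕜} (hA : A.PosSemidef) : Matrix ι ι 𝕜 :=
  hA.1.eigenvectorUnitary.1 * diagonal ((↑) ∘ Real.sqrt ∘ hA.1.eigenvalues) *
    (star hA.1.eigenvectorUnitary : Matrix ι ι 𝕜)

lemma aux_sqrt_mul_self {p : ℕ} {A : Matrix (Fin p) (Fin p) ℝ} (hA : A.PosSemidef) :
    hA.sqrt * hA.sqrt = A := by
  conv_rhs => rw [hA.1.spectral_theorem, Unitary.conjStarAlgAut_apply]
  unfold Matrix.PosSemidef.sqrt
  have hU : (star hA.1.eigenvectorUnitary : Matrix (Fin p) (Fin p) ℝ) *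
      hA.1.eigenvectorUnitary.1 = 1 := Unitary.coe_star_mul_self _
  rw [show ∀ X Y Z : Matrix (Fin p) (Fin p) ℝ, X * Y * Z * (X * Y * Z) = X * Y * (Z * X) * Y * Z
    from fun X Y Z => by simp only [Matrix.mul_assoc], hU, Matrix.mul_one,
    Matrix.mul_assoc _ (diagonal _) (diagonal _), Matrix.diagonal_mul_diagonal]
  congr 3
  funext i
  simp [Real.mul_self_sqrt (hA.eigenvalues_nonneg i)]

lemma aux_sqrt_transpose {p : ℕ} {A : Matrix (Fin p) (Fin p) ℝ} (hA : A.PosSemidef) :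
    hA.sqrtᵀ = hA.sqrt := by
  rw [← Matrix.conjTranspose_eq_transpose_of_trivial]
  unfold Matrix.PosSemidef.sqrt
  simp [Matrix.conjTranspose_mul, Matrix.mul_assoc, Matrix.diagonal_conjTranspose]
  simp only [Matrix.star_eq_conjTranspose, Matrix.conjTranspose_eq_transpose_of_trivial,
    Matrix.transpose_transpose]


lemma aux_measurable_mulVec {p n : ℕ} (M : Matrix (Fin p) (Fin n) ℝ) :
    Measurable fun y : Fin n → ℝ => M.mulVec y := by
  apply measurable_pi_lambda
  intro a
  simp only [Matrix.mulVec, dotProduct]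
  exact Finset.measurable_sum _ fun i _ => (measurable_pi_apply i).const_mul _

lemma aux_measurable_comp_nat {Ω : Type*} [MeasurableSpace Ω] {c : Ω → ℕ} (K : ℕ)
    (hcK : ∀ ω, c ω ≤ K) (hc : Measurable c) {F : ℕ → Ω → ℝ} (hF : ∀ m, Measurable (F m)) :
    Measurable fun ω => F (c ω) ω := by
  have hrw : (fun ω => F (c ω) ω)
      = fun ω => ∑ m ∈ Finset.range (K+1), if c ω = m then F m ω else 0 := by
    funext ω
    rw [Finset.sum_eq_single (c ω)]
    · simp
    · intro m _ hm; exact if_neg fun hh => hm hh.symm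
    · intro hmem; exact absurd (Finset.mem_range.2 (Nat.lt_succ_of_le (hcK ω))) hmem
  rw [hrw]
  exact Finset.measurable_sum _ fun m _ =>
    Measurable.ite (hc (measurableSet_singleton m)) (hF m) measurable_const

lemma aux_integrable_poly_gauss (V : NNReal) (hV : V ≠ 0) (N : ℕ) :
    Integrable (fun x : ℝ => (1 + x ^ 2) ^ N) (gaussianReal 0 V) := by
  have hVpos : (0:ℝ) < (V:ℝ) := by
    exact_mod_cast (pos_iff_ne_zero.2 hV : 0 < V)
  have hb : (0:ℝ) < (2 * (V:ℝ))⁻¹ := by positivity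
  have key : Integrable (fun x : ℝ => (1 + x ^ 2) ^ N * rexp (-(2 * (V:ℝ))⁻¹ * x ^ 2)) := by
    have hrw : (fun x : ℝ => (1 + x ^ 2) ^ N * rexp (-(2 * (V:ℝ))⁻¹ * x ^ 2))
        = fun x => ∑ i ∈ Finset.range (N+1),
            (N.choose i : ℝ) * (x ^ (2*i) * rexp (-(2 * (V:ℝ))⁻¹ * x ^ 2)) := by
      funext x
      rw [add_comm (1:ℝ), add_pow, Finset.sum_mul]
      refine Finset.sum_congr rfl fun i hi => ?_
      rw [one_pow, mul_one, ← pow_mul]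
      ring
    rw [hrw]
    refine integrable_finset_sum _ fun i _ => Integrable.const_mul ?_ _
    have h2 := integrable_rpow_mul_exp_neg_mul_sq hb (s := ((2*i : ℕ) : ℝ))
      (lt_of_lt_of_le (by norm_num) (Nat.cast_nonneg _))
    simp only [Real.rpow_natCast] at h2
    exact h2
  rw [gaussianReal_of_var_ne_zero _ hV]
  have hmpdf : Measurable (gaussianPDF 0 V) := by
    rw [gaussianPDF_def]; exact (measurable_gaussianPDFReal 0 V).ennreal_ofReal
  have hlt : ∀ᵐ x ∂(ℙ : Measure ℝ), gaussianPDF 0 V x < ⊤ := by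
    refine ae_of_all _ fun x => ?_
    rw [gaussianPDF_def]; exact ENNReal.ofReal_lt_top
  rw [integrable_withDensity_iff hmpdf hlt]
  have hrw2 : (fun x : ℝ => (1 + x ^ 2) ^ N * ((gaussianPDF 0 V x)).toReal)
      = fun x => (√(2 * π * (V:ℝ)))⁻¹ * ((1 + x ^ 2) ^ N * rexp (-(2 * (V:ℝ))⁻¹ * x ^ 2)) := by
    funext x
    rw [gaussianPDF_def, ENNReal.toReal_ofReal (gaussianPDFReal_nonneg 0 V x), gaussianPDFReal]
    rw [show -(x - 0)^2 / (2 * (V:ℝ)) = -(2 * (V:ℝ))⁻¹ * x ^ 2 by field_simp; ring]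
    ring
  rw [hrw2]
  exact key.const_mul _


lemma aux_measurePreserving_eval {n : ℕ} (μ : Fin n → Measure ℝ)
    [∀ i, IsProbabilityMeasure (μ i)] (i : Fin n) :
    MeasurePreserving (Function.eval i) (Measure.pi μ) (μ i) := by
  refine ⟨measurable_pi_apply i, ?_⟩
  refine Measure.ext fun s hs => ?_
  rw [Measure.map_apply (measurable_pi_apply i) hs, Set.eval_preimage, Measure.pi_pi]
  rw [Finset.prod_eq_single i (fun j _ hj => by simp [Function.update_of_ne hj])
    (fun hmem => absurd (Finset.mem_univ i) hmem)]
  simp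

lemma aux_sum_rpow_le {n : ℕ} (hn : 0 < n) (a : Fin n → ℝ) (ha : ∀ i, 0 ≤ a i)
    {s : ℝ} (hs : 0 ≤ s) :
    (∑ i, a i) ^ s ≤ (n : ℝ) ^ s * ∑ i, a i ^ s := by
  have : Nonempty (Fin n) := ⟨⟨0, hn⟩⟩
  obtain ⟨i0, -, hmax⟩ := Finset.exists_max_image Finset.univ a Finset.univ_nonempty
  have h1 : (∑ i, a i) ≤ (n : ℝ) * a i0 := by
    calc (∑ i, a i) ≤ ∑ _i : Fin n, a i0 :=
          Finset.sum_le_sum fun i _ => hmax i (Finset.mem_univ i)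
    _ = (n : ℝ) * a i0 := by simp [mul_comm]
  calc (∑ i, a i) ^ s ≤ ((n : ℝ) * a i0) ^ s :=
        Real.rpow_le_rpow (Finset.sum_nonneg fun i _ => ha i) h1 hs
  _ = (n : ℝ) ^ s * a i0 ^ s := Real.mul_rpow (Nat.cast_nonneg n) (ha i0)
  _ ≤ (n : ℝ) ^ s * ∑ i, a i ^ s := by
      refine mul_le_mul_of_nonneg_left ?_ (Real.rpow_nonneg (Nat.cast_nonneg n) s)
      exact Finset.single_le_sum (fun i _ => Real.rpow_nonneg (ha i) s) (Finset.mem_univ i0)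

lemma aux_abs_rpow_le_poly (x : ℝ) {r : ℝ} (hr : 0 ≤ r) {N : ℕ} (hrN : r ≤ N) :
    |x| ^ (2 * r) ≤ (1 + x ^ 2) ^ N := by
  have h1 : |x| ^ (2 * r) = (x ^ 2) ^ r := by
    rw [Real.rpow_mul (abs_nonneg x), show |x| ^ (2:ℝ) = x ^ 2 by
      rw [show (2:ℝ) = ((2:ℕ):ℝ) by norm_num, Real.rpow_natCast, sq_abs]]
  rw [h1]
  calc (x ^ 2) ^ r ≤ (1 + x ^ 2) ^ r :=
        Real.rpow_le_rpow (sq_nonneg x) (by linarith) hr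
  _ ≤ (1 + x ^ 2) ^ (N : ℝ) :=
        Real.rpow_le_rpow_of_exponent_le (by nlinarith [sq_nonneg x]) hrN
  _ = (1 + x ^ 2) ^ N := Real.rpow_natCast _ _

lemma aux_quad_abs_le {n : ℕ} (A : Matrix (Fin n) (Fin n) ℝ) (y : Fin n → ℝ) :
    |y ⬝ᵥ A.mulVec y| ≤ (∑ i, ∑ i', |A i i'|) * (∑ i, |y i|) ^ 2 := by
  have hS : ∀ i : Fin n, |y i| ≤ ∑ j, |y j| :=
    fun i => Finset.single_le_sum (f := fun j => |y j|) (fun j _ => abs_nonneg _) (Finset.mem_univ i)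
  have hSnn : 0 ≤ ∑ j, |y j| := Finset.sum_nonneg fun j _ => abs_nonneg _
  calc |y ⬝ᵥ A.mulVec y| = |∑ i, ∑ i', y i * (A i i' * y i')| := by
        simp [dotProduct, Matrix.mulVec, Finset.mul_sum]
  _ ≤ ∑ i, |∑ i', y i * (A i i' * y i')| := Finset.abs_sum_le_sum_abs _ _
  _ ≤ ∑ i, ∑ i', |y i * (A i i' * y i')| :=
      Finset.sum_le_sum fun i _ => Finset.abs_sum_le_sum_abs _ _
  _ ≤ ∑ i, ∑ i', |A i i'| * ((∑ j, |y j|) * (∑ j, |y j|)) := by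
      refine Finset.sum_le_sum fun i _ => Finset.sum_le_sum fun i' _ => ?_
      rw [abs_mul, abs_mul]
      calc |y i| * (|A i i'| * |y i'|) = |A i i'| * (|y i| * |y i'|) := by ring
      _ ≤ |A i i'| * ((∑ j, |y j|) * (∑ j, |y j|)) := by
          refine mul_le_mul_of_nonneg_left ?_ (abs_nonneg _)
          exact mul_le_mul (hS i) (hS i') (abs_nonneg _) hSnn
  _ = (∑ i, ∑ i', |A i i'|) * (∑ i, |y i|) ^ 2 := by
      simp only [sq, Finset.sum_mul]


lemma aux_measurable_quad {p : ℕ} (B : Matrix (Fin p) (Fin p) ℝ) {Ω : Type*} [MeasurableSpace Ω]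
    {f : Ω → Fin p → ℝ} (hf : Measurable f) :
    Measurable fun ω => quadForm B (f ω) := by
  unfold quadForm
  simp only [dotProduct, Matrix.mulVec]
  refine Finset.measurable_sum _ fun a _ => Measurable.mul ((measurable_pi_apply a).comp hf) ?_
  exact Finset.measurable_sum _ fun b _ =>
    (((measurable_pi_apply b).comp hf).const_mul _)

lemma aux_abs_rpow (x : ℝ) (r : ℝ) : |x| ^ (2 * r) = (x ^ 2) ^ r := by
  rw [Real.rpow_mul (abs_nonneg x), show |x| ^ (2:ℝ) = x ^ 2 by
    rw [show (2:ℝ) = ((2:ℕ):ℝ) by norm_num, Real.rpow_natCast, sq_abs]]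

/-- **Componentwise propagation conditions.** Under (A6), (A7) and (PC), for any `θ`, any
coordinate `j` and all `k = 2, …, K`, the componentwise risk under `N(Ψᵀθ, Σ)` is bounded
by the risk of `‖B_k^{1/2}(θ̃_k - θ̂_k)‖` under `N(0, Σ)`, which is at most `α C(p,r)`. -/
theorem componentwise_propagation_conditions
    (n p K : ℕ) (hpn : p < n) (hK : 1 ≤ K)
    (σv : Fin n → ℝ) (hσ : ∀ i, 0 < σv i)
    (Ψ : Matrix (Fin p) (Fin n) ℝ) (hA1 : Ψ.rank = p)
    (w : ℕ → Fin n → ℝ)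
    (hw : ∀ k, 1 ≤ k → k ≤ K → ∀ i, w k i ∈ Set.Icc (0 : ℝ) 1)
    (hA3 : ∀ k, 2 ≤ k → k ≤ K → ∀ i, w (k - 1) i ≤ w k i)
    (hB : ∀ k, 1 ≤ k → k ≤ K → (Bmat n p σv Ψ (w k)).PosDef)
    (σmin σmax : ℕ → ℝ)
    (hA6 : ∀ k, 1 ≤ k → k ≤ K → 0 < σmin k ∧ σmin k ≤ σmax k ∧
      ∀ i, 0 < w k i → σmin k ≤ σv i ^ 2 ∧ σv i ^ 2 ≤ σmax k)
    (d : ℕ) (h : ℕ → ℝ) (hh : ∀ k, 1 ≤ k → k ≤ K → 0 < h k)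
    (Λ0 : ℝ) (hΛ0 : 0 < Λ0)
    (hA7 : ∀ k, 1 ≤ k → k ≤ K →
      LoewnerLE (((n : ℝ) * h k ^ d * Λ0 / σmax k) • (1 : Matrix (Fin p) (Fin p) ℝ))
        (Bmat n p σv Ψ (w k)))
    (r α : ℝ) (hr : 0 < r) (hα0 : 0 < α) (hα1 : α ≤ 1)
    (z : ℕ → ℝ)
    (hPC : ∀ k, 2 ≤ k → k ≤ K →
      ∫ y, |quadForm (Bmat n p σv Ψ (w k))
          (thetaTilde n p σv Ψ (w k) y - thetaHatStep n p K σv Ψ w z k y)| ^ r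
        ∂ gaussianVec n 0 σv ≤ α * Cpr p r)
    (θ : Fin p → ℝ) (j : Fin p) :
    ∀ (k : ℕ) (hk2 : 2 ≤ k) (hkK : k ≤ K),
      (((n : ℝ) * h k ^ d * Λ0 / sbarMax σmax k) ^ r *
        ∫ y, |thetaTilde n p σv Ψ (w k) y j - thetaHatStep n p K σv Ψ w z k y j| ^ (2 * r)
          ∂ gaussianVec n (Ψᵀ.mulVec θ) σv ≤
      ∫ y, enorm (((hB k (one_le_two.trans hk2) hkK).posSemidef.sqrt).mulVec
          (thetaTilde n p σv Ψ (w k) y - thetaHatStep n p K σv Ψ w z k y)) ^ (2 * r)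
        ∂ gaussianVec n 0 σv) ∧
      (∫ y, enorm (((hB k (one_le_two.trans hk2) hkK).posSemidef.sqrt).mulVec
          (thetaTilde n p σv Ψ (w k) y - thetaHatStep n p K σv Ψ w z k y)) ^ (2 * r)
        ∂ gaussianVec n 0 σv ≤ α * Cpr p r) := by
  intro k hk2 hkK
  have hk1 : 1 ≤ k := one_le_two.trans hk2
  have hBk : (Bmat n p σv Ψ (w k)).PosDef := hB k hk1 hkK
  -- Step A: pointwise identity between the norm of sqrt B applied and the quadratic form
  have hA : ∀ u : Fin p → ℝ,
      enorm (((hB k (one_le_two.trans hk2) hkK).posSemidef.sqrt).mulVec u) ^ (2 * r)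
        = |quadForm (Bmat n p σv Ψ (w k)) u| ^ r := by
    intro u
    set S := (hB k (one_le_two.trans hk2) hkK).posSemidef.sqrt with hSdef
    have hsym : Sᵀ = S :=
      (Matrix.conjTranspose_eq_transpose_of_trivial S).symm.trans
        (aux_sqrt_transpose (hB k (one_le_two.trans hk2) hkK).posSemidef)
    have hq : quadForm (Bmat n p σv Ψ (w k)) u = (S.mulVec u) ⬝ᵥ (S.mulVec u) := by
      unfold quadForm
      conv_lhs => rw [← aux_sqrt_mul_self (hB k (one_le_two.trans hk2) hkK).posSemidef, ← hSdef]
      rw [← Matrix.mulVec_mulVec, Matrix.dotProduct_mulVec, ← Matrix.mulVec_transpose, hsym]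
    have hnn : 0 ≤ (S.mulVec u) ⬝ᵥ (S.mulVec u) :=
      Finset.sum_nonneg fun i _ => mul_self_nonneg _
    have henn : 0 ≤ enorm (S.mulVec u) := Real.sqrt_nonneg _
    calc enorm (S.mulVec u) ^ (2 * r) = (enorm (S.mulVec u) ^ (2:ℝ)) ^ r :=
          Real.rpow_mul henn 2 r
    _ = (quadForm (Bmat n p σv Ψ (w k)) u) ^ r := by
        rw [show (2:ℝ) = ((2:ℕ):ℝ) by norm_num, Real.rpow_natCast]
        congr 1
        rw [hq]
        unfold enorm
        rw [Real.sq_sqrt (Finset.sum_nonneg fun i _ => sq_nonneg _)]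
        simp [dotProduct, pow_two]
    _ = |quadForm (Bmat n p σv Ψ (w k)) u| ^ r := by
        rw [abs_of_nonneg (hq ▸ hnn)]
  simp only [hA]
  refine ⟨?_, hPC k hk2 hkK⟩
  -- notation
  set c : Fin n → ℝ := Ψᵀ.mulVec θ with hc
  -- shift of the estimators
  have hTshift : ∀ l, 1 ≤ l → l ≤ K → ∀ y : Fin n → ℝ,
      thetaTilde n p σv Ψ (w l) (y + c) = thetaTilde n p σv Ψ (w l) y + θ := by
    intro l hl1 hlK y
    have hBl := hB l hl1 hlK
    have hdet : IsUnit (Bmat n p σv Ψ (w l)).det :=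
      isUnit_iff_ne_zero.2 (ne_of_gt hBl.det_pos)
    have hDl : Dmat n p σv Ψ (w l) * Ψᵀ = 1 := by
      unfold Dmat
      rw [Matrix.mul_assoc, Matrix.mul_assoc, ← Matrix.mul_assoc Ψ]
      exact Matrix.nonsing_inv_mul _ hdet
    unfold thetaTilde
    rw [Matrix.mulVec_add, hc, Matrix.mulVec_mulVec, hDl, Matrix.one_mulVec]
  have hTstat_shift : ∀ l m', 1 ≤ l → l < m' → m' ≤ K → ∀ y,
      Tstat n p σv Ψ w l m' (y + c) = Tstat n p σv Ψ w l m' y := by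
    intro l m' h1 h2 h3 y
    unfold Tstat
    rw [hTshift l h1 (le_trans (le_of_lt h2) h3) y, hTshift m' (le_trans h1 (le_of_lt h2)) h3 y,
      add_sub_add_right_eq_sub]
  have hbdd : ∀ y : Fin n → ℝ, BddAbove {k' | k' ≤ K ∧ ∀ l m, 1 ≤ l → l < m → m ≤ k' →
      Tstat n p σv Ψ w l m y ≤ z l} := fun y => ⟨K, fun m hm => hm.1⟩
  have h1mem : ∀ y : Fin n → ℝ, 1 ∈ {k' | k' ≤ K ∧ ∀ l m, 1 ≤ l → l < m → m ≤ k' →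
      Tstat n p σv Ψ w l m y ≤ z l} :=
    fun y => ⟨hK, fun l m h1 h2 h3 => absurd h2 (by omega)⟩
  have hkhat_le : ∀ y, khat n p K σv Ψ w z y ≤ K := by
    intro y; exact csSup_le ⟨1, h1mem y⟩ fun m hm => hm.1
  have hkhat_ge : ∀ y, 1 ≤ khat n p K σv Ψ w z y := by
    intro y; exact le_csSup (hbdd y) (h1mem y)
  have hkhat_shift : ∀ y, khat n p K σv Ψ w z (y + c) = khat n p K σv Ψ w z y := by
    intro y
    unfold khat
    congr 1
    ext m
    simp only [Set.mem_setOf_eq]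
    refine and_congr_right fun hmK => ?_
    refine forall_congr' fun l => forall_congr' fun m' => ?_
    refine imp_congr_right fun h1 => imp_congr_right fun h2 => imp_congr_right fun h3 => ?_
    rw [hTstat_shift l m' h1 h2 (h3.trans hmK) y]
  have hhat_shift : ∀ y, thetaHatStep n p K σv Ψ w z k (y + c)
      = thetaHatStep n p K σv Ψ w z k y + θ := by
    intro y
    unfold thetaHatStep
    rw [hkhat_shift y]
    exact hTshift _ (le_min hk1 (hkhat_ge y)) (le_trans (min_le_left _ _) hkK) y
  have hv_shift : ∀ y, thetaTilde n p σv Ψ (w k) (y + c) - thetaHatStep n p K σv Ψ w z k (y + c)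
      = thetaTilde n p σv Ψ (w k) y - thetaHatStep n p K σv Ψ w z k y := by
    intro y
    rw [hTshift k hk1 hkK y, hhat_shift y, add_sub_add_right_eq_sub]
  -- the measure shift
  have hmp : MeasurePreserving (fun y : Fin n → ℝ => y + c)
      (gaussianVec n 0 σv) (gaussianVec n (Ψᵀ.mulVec θ) σv) := by
    have hone : ∀ i : Fin n, MeasurePreserving (fun x : ℝ => x + c i)
        (gaussianReal 0 (Real.toNNReal (σv i ^ 2)))
        (gaussianReal (c i) (Real.toNNReal (σv i ^ 2))) := by
      intro i
      refine ⟨measurable_id.add_const _, ?_⟩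
      simpa using gaussianReal_map_add_const (μ := 0) (v := Real.toNNReal (σv i ^ 2)) (c i)
    exact measurePreserving_pi _ _ hone
  have hemb : MeasurableEmbedding (fun y : Fin n → ℝ => y + c) :=
    (MeasurableEquiv.addRight c).measurableEmbedding
  have hshift_int :
      ∫ y, |thetaTilde n p σv Ψ (w k) y j - thetaHatStep n p K σv Ψ w z k y j| ^ (2 * r)
          ∂ gaussianVec n (Ψᵀ.mulVec θ) σv
        = ∫ y, |thetaTilde n p σv Ψ (w k) y j - thetaHatStep n p K σv Ψ w z k y j| ^ (2 * r)
          ∂ gaussianVec n 0 σv := by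
    rw [← hmp.integral_comp hemb
      (fun y => |thetaTilde n p σv Ψ (w k) y j - thetaHatStep n p K σv Ψ w z k y j| ^ (2 * r))]
    refine integral_congr_ae (ae_of_all _ fun y => ?_)
    have h1 := congrFun (hv_shift y) j
    simp only [Pi.sub_apply] at h1
    exact congrArg (fun t : ℝ => |t| ^ (2 * r)) h1
  -- positivity facts
  have hnum : (0:ℝ) < (n:ℝ) * h k ^ d * Λ0 :=
    mul_pos (mul_pos (by exact_mod_cast lt_of_le_of_lt (Nat.zero_le p) hpn)
      (pow_pos (hh k hk1 hkK) d)) hΛ0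
  have hσmaxpos : 0 < σmax k := lt_of_lt_of_le (hA6 k hk1 hkK).1 (hA6 k hk1 hkK).2.1
  have hsbar_ge : σmax k ≤ sbarMax σmax k := by
    unfold sbarMax
    exact le_csSup ((Set.finite_Icc 1 k).image σmax).bddAbove ⟨k, ⟨hk1, le_refl k⟩, rfl⟩
  have hsbarpos : 0 < sbarMax σmax k := lt_of_lt_of_le hσmaxpos hsbar_ge
  have hlam : (n:ℝ) * h k ^ d * Λ0 / sbarMax σmax k ≤ (n:ℝ) * h k ^ d * Λ0 / σmax k :=
    div_le_div_of_nonneg_left hnum.le hσmaxpos hsbar_ge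
  have hlamnn : 0 ≤ (n:ℝ) * h k ^ d * Λ0 / sbarMax σmax k := (div_pos hnum hsbarpos).le
  -- the pointwise bound
  have hpoint : ∀ u : Fin p → ℝ,
      ((n:ℝ) * h k ^ d * Λ0 / sbarMax σmax k) ^ r * |u j| ^ (2 * r)
        ≤ |quadForm (Bmat n p σv Ψ (w k)) u| ^ r := by
    intro u
    have hps := (hA7 k hk1 hkK).dotProduct_mulVec_nonneg u
    have hq1 : ((n:ℝ) * h k ^ d * Λ0 / σmax k) * (u ⬝ᵥ u)
        ≤ quadForm (Bmat n p σv Ψ (w k)) u := by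
      unfold LoewnerLE at hps
      simp only [Matrix.sub_mulVec, Matrix.smul_mulVec, Matrix.one_mulVec,
        dotProduct_sub, dotProduct_smul, star_trivial, smul_eq_mul,
        sub_nonneg] at hps
      exact hps
    have huj : u j * u j ≤ u ⬝ᵥ u :=
      Finset.single_le_sum (f := fun i => u i * u i) (fun i _ => mul_self_nonneg _)
        (Finset.mem_univ j)
    have hq2 : ((n:ℝ) * h k ^ d * Λ0 / sbarMax σmax k) * (u j ^ 2)
        ≤ quadForm (Bmat n p σv Ψ (w k)) u := by
      refine le_trans ?_ hq1
      have h2 : u j ^ 2 ≤ u ⬝ᵥ u := by rw [pow_two]; exact huj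
      calc ((n:ℝ) * h k ^ d * Λ0 / sbarMax σmax k) * (u j ^ 2)
          ≤ ((n:ℝ) * h k ^ d * Λ0 / σmax k) * (u j ^ 2) :=
            mul_le_mul_of_nonneg_right hlam (sq_nonneg _)
      _ ≤ ((n:ℝ) * h k ^ d * Λ0 / σmax k) * (u ⬝ᵥ u) :=
            mul_le_mul_of_nonneg_left h2 (div_pos hnum hσmaxpos).le
    have hqnn : 0 ≤ quadForm (Bmat n p σv Ψ (w k)) u :=
      le_trans (mul_nonneg hlamnn (sq_nonneg _)) hq2
    calc ((n:ℝ) * h k ^ d * Λ0 / sbarMax σmax k) ^ r * |u j| ^ (2 * r)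
        = (((n:ℝ) * h k ^ d * Λ0 / sbarMax σmax k) * (u j ^ 2)) ^ r := by
          rw [aux_abs_rpow, Real.mul_rpow hlamnn (sq_nonneg _)]
    _ ≤ (quadForm (Bmat n p σv Ψ (w k)) u) ^ r :=
          Real.rpow_le_rpow (mul_nonneg hlamnn (sq_nonneg _)) hq2 hr.le
    _ ≤ |quadForm (Bmat n p σv Ψ (w k)) u| ^ r := by rw [abs_of_nonneg hqnn]
  -- measurability
  have hTmeas : ∀ l m', Measurable (fun y => Tstat n p σv Ψ w l m' y) := by
    intro l m'
    unfold Tstat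
    exact aux_measurable_quad _ ((aux_measurable_mulVec _).sub (aux_measurable_mulVec _))
  have hkhat_meas : Measurable (khat n p K σv Ψ w z) := by
    apply measurable_to_countable'
    intro m
    set P : ℕ → Set (Fin n → ℝ) := fun kk =>
      {y | kk ≤ K ∧ ∀ l m', 1 ≤ l → l < m' → m' ≤ kk → Tstat n p σv Ψ w l m' y ≤ z l} with hP
    have hPmeas : ∀ kk, MeasurableSet (P kk) := by
      intro kk
      have hPeq : P kk = {y : Fin n → ℝ | kk ≤ K} ∩
          ⋂ (l : ℕ) (m' : ℕ) (_ : 1 ≤ l) (_ : l < m') (_ : m' ≤ kk),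
            {y | Tstat n p σv Ψ w l m' y ≤ z l} := by
        ext y
        simp only [hP, Set.mem_setOf_eq, Set.mem_inter_iff, Set.mem_iInter]
      rw [hPeq]
      refine (MeasurableSet.const _).inter ?_
      refine MeasurableSet.iInter fun l => MeasurableSet.iInter fun m' =>
        MeasurableSet.iInter fun _ => MeasurableSet.iInter fun _ =>
        MeasurableSet.iInter fun _ => ?_
      exact measurableSet_le (hTmeas l m') measurable_const
    have hchar : khat n p K σv Ψ w z ⁻¹' {m}
        = P m ∩ ⋂ (kk : ℕ) (_ : m < kk) (_ : kk ≤ K), (P kk)ᶜ := by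
      ext y
      simp only [Set.mem_preimage, Set.mem_singleton_iff, Set.mem_inter_iff, Set.mem_iInter,
        Set.mem_compl_iff]
      constructor
      · rintro rfl
        have hmem : khat n p K σv Ψ w z y ∈ {k' | k' ≤ K ∧ ∀ l m, 1 ≤ l → l < m → m ≤ k' →
            Tstat n p σv Ψ w l m y ≤ z l} := Nat.sSup_mem ⟨1, h1mem y⟩ (hbdd y)
        refine ⟨hmem, fun kk h1 h2 hcon => ?_⟩
        have hle : kk ≤ khat n p K σv Ψ w z y := le_csSup (hbdd y) hcon
        omega
      · rintro ⟨hPm, hub⟩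
        refine le_antisymm (csSup_le ⟨1, h1mem y⟩ fun k' hk' => ?_) (le_csSup (hbdd y) hPm)
        by_contra hcon
        exact hub k' (by omega) hk'.1 hk'
    exact hchar ▸ (hPmeas m).inter (MeasurableSet.iInter fun kk => MeasurableSet.iInter fun _ =>
      MeasurableSet.iInter fun _ => (hPmeas kk).compl)
  have hhatmeas : Measurable (thetaHatStep n p K σv Ψ w z k) := by
    apply measurable_pi_lambda
    intro a
    exact aux_measurable_comp_nat K hkhat_le hkhat_meas
      (F := fun m y => thetaTilde n p σv Ψ (w (min k m)) y a)
      (fun m => (measurable_pi_apply a).comp (aux_measurable_mulVec (Dmat n p σv Ψ (w (min k m)))))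
  have hvmeas : Measurable (fun y => thetaTilde n p σv Ψ (w k) y
      - thetaHatStep n p K σv Ψ w z k y) :=
    (aux_measurable_mulVec (Dmat n p σv Ψ (w k))).sub hhatmeas
  have hbigmeas : Measurable (fun y => |quadForm (Bmat n p σv Ψ (w k))
      (thetaTilde n p σv Ψ (w k) y - thetaHatStep n p K σv Ψ w z k y)| ^ r) :=
    (Real.continuous_rpow_const hr.le).measurable.comp ((aux_measurable_quad _ hvmeas).abs)
  -- integrability: dominating function
  set N : ℕ := ⌈r⌉₊ with hN
  have hrN : r ≤ (N:ℝ) := Nat.le_ceil r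
  have hDOMint : Integrable (fun y : Fin n → ℝ => ∑ i, (1 + (y i) ^ 2) ^ N)
      (gaussianVec n 0 σv) := by
    refine integrable_finset_sum _ fun i _ => ?_
    have hVne : Real.toNNReal (σv i ^ 2) ≠ 0 := by
      simp only [ne_eq, Real.toNNReal_eq_zero, not_le]
      exact pow_pos (hσ i) 2
    have h1 : Integrable (fun x : ℝ => (1 + x ^ 2) ^ N)
        (gaussianReal 0 (Real.toNNReal (σv i ^ 2))) := aux_integrable_poly_gauss _ hVne N
    have hpm := aux_measurePreserving_eval
      (fun i => gaussianReal ((0 : Fin n → ℝ) i) (Real.toNNReal (σv i ^ 2))) i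
    exact (hpm.integrable_comp
      (((measurable_id.pow_const 2).const_add 1).pow_const N).aestronglyMeasurable).2 h1
  have hterm_le : ∀ (M : Matrix (Fin p) (Fin n) ℝ), ∃ C : ℝ, ∀ y : Fin n → ℝ,
      |quadForm (Bmat n p σv Ψ (w k)) (M.mulVec y)| ^ r
        ≤ C * ∑ i, (1 + (y i) ^ 2) ^ N := by
    intro M
    set A' : Matrix (Fin n) (Fin n) ℝ := ((Bmat n p σv Ψ (w k)) * M)ᵀ * M with hA'
    have hqA : ∀ y, quadForm (Bmat n p σv Ψ (w k)) (M.mulVec y) = y ⬝ᵥ A'.mulVec y := by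
      intro y
      unfold quadForm
      rw [Matrix.mulVec_mulVec, Matrix.dotProduct_mulVec, ← Matrix.mulVec_transpose,
        Matrix.mulVec_mulVec, dotProduct_comm]
    set CA : ℝ := ∑ i, ∑ i', |A' i i'| with hCA
    have hCAnn : 0 ≤ CA := Finset.sum_nonneg fun i _ =>
      Finset.sum_nonneg fun i' _ => abs_nonneg _
    refine ⟨CA ^ r * (n:ℝ) ^ (2 * r), fun y => ?_⟩
    have hSnn : 0 ≤ ∑ i, |y i| := Finset.sum_nonneg fun i _ => abs_nonneg _
    calc |quadForm (Bmat n p σv Ψ (w k)) (M.mulVec y)| ^ r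
        ≤ (CA * (∑ i, |y i|) ^ 2) ^ r := by
          refine Real.rpow_le_rpow (abs_nonneg _) ?_ hr.le
          rw [hqA]
          exact aux_quad_abs_le A' y
    _ = CA ^ r * ((∑ i, |y i|) ^ 2) ^ r :=
          Real.mul_rpow hCAnn (sq_nonneg _)
    _ = CA ^ r * (∑ i, |y i|) ^ (2 * r) := by
          rw [← aux_abs_rpow, abs_of_nonneg hSnn]
    _ ≤ CA ^ r * ((n:ℝ) ^ (2 * r) * ∑ i, |y i| ^ (2 * r)) := by
          refine mul_le_mul_of_nonneg_left ?_ (Real.rpow_nonneg hCAnn r)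
          exact aux_sum_rpow_le (lt_of_le_of_lt (Nat.zero_le p) hpn) _
            (fun i => abs_nonneg _) (by positivity)
    _ ≤ CA ^ r * ((n:ℝ) ^ (2 * r) * ∑ i, (1 + (y i) ^ 2) ^ N) := by
          refine mul_le_mul_of_nonneg_left (mul_le_mul_of_nonneg_left ?_
            (Real.rpow_nonneg (Nat.cast_nonneg n) _)) (Real.rpow_nonneg hCAnn r)
          exact Finset.sum_le_sum fun i _ => aux_abs_rpow_le_poly (y i) hr.le hrN
    _ = CA ^ r * (n:ℝ) ^ (2 * r) * ∑ i, (1 + (y i) ^ 2) ^ N := by ring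
  have hterm_int : ∀ m : ℕ, Integrable (fun y => |quadForm (Bmat n p σv Ψ (w k))
      (thetaTilde n p σv Ψ (w k) y - thetaTilde n p σv Ψ (w m) y)| ^ r)
      (gaussianVec n 0 σv) := by
    intro m
    set M : Matrix (Fin p) (Fin n) ℝ := Dmat n p σv Ψ (w k) - Dmat n p σv Ψ (w m) with hM
    have hlin : ∀ y : Fin n → ℝ,
        thetaTilde n p σv Ψ (w k) y - thetaTilde n p σv Ψ (w m) y = M.mulVec y := by
      intro y; rw [hM, Matrix.sub_mulVec]; rfl
    obtain ⟨C, hC⟩ := hterm_le M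
    refine Integrable.mono' (hDOMint.const_mul C) ?_ (ae_of_all _ fun y => ?_)
    · exact ((Real.continuous_rpow_const hr.le).measurable.comp
        ((aux_measurable_quad _ ((aux_measurable_mulVec _).sub
          (aux_measurable_mulVec _))).abs)).aestronglyMeasurable
    · rw [Real.norm_eq_abs, abs_of_nonneg (Real.rpow_nonneg (abs_nonneg _) _), hlin y]
      exact hC y
  have hbigint : Integrable (fun y => |quadForm (Bmat n p σv Ψ (w k))
      (thetaTilde n p σv Ψ (w k) y - thetaHatStep n p K σv Ψ w z k y)| ^ r)
      (gaussianVec n 0 σv) := by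
    refine Integrable.mono'
      (integrable_finset_sum (Finset.Icc 1 K) fun m _ => hterm_int m)
      hbigmeas.aestronglyMeasurable (ae_of_all _ fun y => ?_)
    rw [Real.norm_eq_abs, abs_of_nonneg (Real.rpow_nonneg (abs_nonneg _) _)]
    have hmem : min k (khat n p K σv Ψ w z y) ∈ Finset.Icc 1 K :=
      Finset.mem_Icc.2 ⟨le_min hk1 (hkhat_ge y), le_trans (min_le_left _ _) hkK⟩
    exact Finset.single_le_sum
      (f := fun m => |quadForm (Bmat n p σv Ψ (w k))
        (thetaTilde n p σv Ψ (w k) y - thetaTilde n p σv Ψ (w m) y)| ^ r)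
      (fun m _ => Real.rpow_nonneg (abs_nonneg _) r) hmem
  -- conclusion
  rw [hshift_int, ← integral_const_mul]
  refine integral_mono_of_nonneg (ae_of_all _ fun y => ?_) hbigint (ae_of_all _ fun y => ?_)
  · exact mul_nonneg (Real.rpow_nonneg hlamnn r) (Real.rpow_nonneg (abs_nonneg _) _)
  · exact hpoint (thetaTilde n p σv Ψ (w k) y - thetaHatStep n p K σv Ψ w z k y)

end SpatialAdapt
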